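/- Fix an integer l ≥ 0 and reals g, h. For x ∈ (0, π/2), let ψp(x) = P_l^{(-g-l-3/2, h+l-1/2)}(cos 2x) and ψm(x) = P_l^{(-g-l-1/2, h+l-3/2)}(cos 2x). Then -8l(h-g+l-1)·ψp·ψm + 2(2h+2l-1)·tan x·ψp·ψm' + 2(2g+2l+1)·cot x·ψm·ψp' - 2·ψm'·ψp' = 0 for all x ∈ (0, π/2). -/

import Mathlib

open Finset

/-- Generalized binomial coefficient `C(z, k) = z(z-1)⋯(z-k+1)/k!`. -/
noncomputable def genChoose (z : ℝ) (k : ℕ) : ℝ :=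
  (descPochhammer ℝ k).eval z / (Nat.factorial k)

/-- The Jacobi polynomial
`P_n^{(a,b)}(x) = ∑_{s=0}^n C(n+a, n-s) C(n+b, s) ((x-1)/2)^s ((x+1)/2)^{n-s}`. -/
noncomputable def jacobi (n : ℕ) (a b x : ℝ) : ℝ :=
  ∑ s ∈ range (n + 1),
    genChoose ((n : ℝ) + a) (n - s) * genChoose ((n : ℝ) + b) s *
      ((x - 1) / 2) ^ s * ((x + 1) / 2) ^ (n - s)

lemma gc_zero (z : ℝ) : genChoose z 0 = 1 := by simp [genChoose]

lemma gc_succ (z : ℝ) (k : ℕ) :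
    ((k : ℝ) + 1) * genChoose z (k + 1) = (z - k) * genChoose z k := by
  have hf : (Nat.factorial k : ℝ) ≠ 0 := by positivity
  simp only [genChoose, descPochhammer_succ_right, Polynomial.eval_mul,
    Polynomial.eval_sub, Polynomial.eval_X, Polynomial.eval_natCast,
    Nat.factorial_succ]
  push_cast
  field_simp

lemma gc_shift (z : ℝ) (k : ℕ) :
    (z - k) * genChoose z k = z * genChoose (z - 1) k := by
  have h1 : (descPochhammer ℝ (k+1)).eval z =
      (descPochhammer ℝ k).eval z * (z - k) := by
    simp [descPochhammer_succ_right]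
  have h2 : (descPochhammer ℝ (k+1)).eval z =
      z * (descPochhammer ℝ k).eval (z - 1) := by
    rw [descPochhammer_succ_left]
    simp [Polynomial.eval_comp]
  have hf : (Nat.factorial k : ℝ) ≠ 0 := by positivity
  simp only [genChoose]
  field_simp
  linear_combination h1.symm.trans h2

lemma gc_pascal (z : ℝ) (k : ℕ) :
    genChoose (z + 1) (k + 1) = genChoose z (k + 1) + genChoose z k := by
  have h1 := gc_succ (z + 1) k
  have h2 := gc_succ z k
  have h3' : (z + 1 - k) * genChoose (z+1) k = (z+1) * genChoose z k := by
    simpa using gc_shift (z + 1) k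
  have hk : ((k:ℝ) + 1) ≠ 0 := by positivity
  refine mul_left_cancel₀ hk ?_
  linear_combination h1 + h3' - h2

noncomputable def jacobiD (n : ℕ) (a b x : ℝ) : ℝ :=
  ∑ s ∈ range (n + 1),
    (genChoose ((n : ℝ) + a) (n - s) * genChoose ((n : ℝ) + b) s *
        ((s : ℝ) * ((x - 1) / 2) ^ (s - 1) * (1 / 2)) * ((x + 1) / 2) ^ (n - s)
      + genChoose ((n : ℝ) + a) (n - s) * genChoose ((n : ℝ) + b) s * ((x - 1) / 2) ^ s *
        (((n - s : ℕ) : ℝ) * ((x + 1) / 2) ^ (n - s - 1) * (1 / 2)))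

lemma hasDerivAt_jacobi (n : ℕ) (a b y : ℝ) :
    HasDerivAt (fun y => jacobi n a b y) (jacobiD n a b y) y := by
  simp only [jacobi, jacobiD]
  apply HasDerivAt.fun_sum
  intro s _
  have hu : HasDerivAt (fun y : ℝ => (y - 1) / 2) (1 / 2) y := by
    simpa using ((hasDerivAt_id y).sub_const 1).div_const 2
  have hv : HasDerivAt (fun y : ℝ => (y + 1) / 2) (1 / 2) y := by
    simpa using ((hasDerivAt_id y).add_const 1).div_const 2
  exact ((hu.pow s).const_mul
      (genChoose ((n : ℝ) + a) (n - s) * genChoose ((n : ℝ) + b) s)).mul (hv.pow (n - s))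

/- auxiliary terms for lemma I -/
noncomputable def termA (n : ℕ) (a b y : ℝ) (s : ℕ) : ℝ :=
  -(a + s) * genChoose ((n:ℝ) + a) (n - s) * genChoose ((n:ℝ) + b) s *
    ((y - 1) / 2) ^ s * ((y + 1) / 2) ^ (n - s)

noncomputable def termB (n : ℕ) (a b y : ℝ) (s : ℕ) : ℝ :=
  -((n - s : ℕ) : ℝ) * genChoose ((n:ℝ) + a) (n - s) * genChoose ((n:ℝ) + b) s *
    ((y - 1) / 2) ^ (s + 1) * ((y + 1) / 2) ^ (n - s - 1)

noncomputable def termG (n : ℕ) (a b y : ℝ) (s : ℕ) : ℝ :=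
  -((n:ℝ) + a) * (genChoose ((n:ℝ) + a - 1) (n - s) * genChoose ((n:ℝ) + b + 1) s *
    ((y - 1) / 2) ^ s * ((y + 1) / 2) ^ (n - s))

lemma lemI (n : ℕ) (a b y : ℝ) :
    (1 - y) * jacobiD n a b y - a * jacobi n a b y
      = -((n:ℝ) + a) * jacobi n (a - 1) (b + 1) y := by
  have ea : ((n:ℝ) + (a - 1)) = ((n:ℝ) + a) - 1 := by ring
  have eb : ((n:ℝ) + (b + 1)) = ((n:ℝ) + b) + 1 := by ring
  have hstep1 : (1 - y) * jacobiD n a b y - a * jacobi n a b y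
      = ∑ s ∈ range (n+1), (termA n a b y s + termB n a b y s) := by
    simp only [jacobi, jacobiD, Finset.mul_sum, ← Finset.sum_sub_distrib]
    refine Finset.sum_congr rfl fun s hs => ?_
    simp only [termA, termB]
    rcases s with _ | t
    · norm_num
      ring
    · simp only [Nat.add_sub_cancel]
      push_cast
      ring
  have hG : -((n:ℝ) + a) * jacobi n (a - 1) (b + 1) y
      = ∑ s ∈ range (n+1), termG n a b y s := by
    simp only [jacobi, Finset.mul_sum, termG, ea, eb]
  rw [hstep1, hG]
  rw [Finset.sum_add_distrib, Finset.sum_range_succ' (termA n a b y) n,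
    Finset.sum_range_succ (termB n a b y) n, Finset.sum_range_succ' (termG n a b y) n]
  have hBn : termB n a b y n = 0 := by simp [termB, Nat.sub_self]
  have h0 : termA n a b y 0 = termG n a b y 0 := by
    simp only [termA, termG, Nat.sub_zero, Nat.cast_zero, pow_zero, gc_zero]
    linear_combination (-(((y+1)/2)^n)) * gc_shift ((n:ℝ) + a) n
  have hmain : ∑ s ∈ range n, termA n a b y (s+1) + ∑ s ∈ range n, termB n a b y s
      = ∑ s ∈ range n, termG n a b y (s+1) := by
    rw [← Finset.sum_add_distrib]
    refine Finset.sum_congr rfl fun s hs => ?_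
    have hsn : s < n := mem_range.mp hs
    simp only [termA, termB, termG]
    have e3 : n - s - 1 = n - (s+1) := by omega
    rw [e3]
    have h1 := gc_succ ((n:ℝ) + a) (n - (s+1))
    rw [show n - (s+1) + 1 = n - s from by omega] at h1
    have h2 := gc_shift ((n:ℝ) + a) (n - (s+1))
    have h3 := gc_pascal ((n:ℝ) + b) s
    have ec : ((n - (s+1) : ℕ) : ℝ) = (n:ℝ) - s - 1 := by
      rw [Nat.cast_sub (by omega)]; push_cast; ring
    have ed : ((n - s : ℕ) : ℝ) = (n:ℝ) - s := by rw [Nat.cast_sub (by omega)]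
    rw [ec] at h1 h2
    rw [ed]
    push_cast
    set M := ((y-1)/2)^(s+1) * ((y+1)/2)^(n-(s+1)) with hM
    set Cb0 := genChoose ((n:ℝ) + b) s
    set Cb1 := genChoose ((n:ℝ) + b) (s+1)
    set Da := genChoose ((n:ℝ) + a - 1) (n - (s+1))
    linear_combination (-Cb0*M) * h1 + (-(Cb1+Cb0)*M) * h2 + (((n:ℝ)+a)*Da*M) * h3
  linear_combination hmain + h0 + hBn

/- auxiliary terms for lemma II -/
noncomputable def termC (n : ℕ) (a b y : ℝ) (s : ℕ) : ℝ :=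
  (((n - s : ℕ) : ℝ) + b) * genChoose ((n:ℝ) + a) (n - s) * genChoose ((n:ℝ) + b) s *
    ((y - 1) / 2) ^ s * ((y + 1) / 2) ^ (n - s)

noncomputable def termD (n : ℕ) (a b y : ℝ) (s : ℕ) : ℝ :=
  (s : ℝ) * genChoose ((n:ℝ) + a) (n - s) * genChoose ((n:ℝ) + b) s *
    ((y - 1) / 2) ^ (s - 1) * ((y + 1) / 2) ^ (n - s + 1)

noncomputable def termH (n : ℕ) (a b y : ℝ) (s : ℕ) : ℝ :=
  ((n:ℝ) + b) * (genChoose ((n:ℝ) + a + 1) (n - s) * genChoose ((n:ℝ) + b - 1) s *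
    ((y - 1) / 2) ^ s * ((y + 1) / 2) ^ (n - s))

lemma lemII (n : ℕ) (a b y : ℝ) :
    (1 + y) * jacobiD n a b y + b * jacobi n a b y
      = ((n:ℝ) + b) * jacobi n (a + 1) (b - 1) y := by
  have ea : ((n:ℝ) + (a + 1)) = ((n:ℝ) + a) + 1 := by ring
  have eb : ((n:ℝ) + (b - 1)) = ((n:ℝ) + b) - 1 := by ring
  have hstep1 : (1 + y) * jacobiD n a b y + b * jacobi n a b y
      = ∑ s ∈ range (n+1), (termC n a b y s + termD n a b y s) := by
    simp only [jacobi, jacobiD, Finset.mul_sum, ← Finset.sum_add_distrib]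
    refine Finset.sum_congr rfl fun s hs => ?_
    have hsn : s ≤ n := by have := mem_range.mp hs; omega
    simp only [termC, termD]
    by_cases hs' : s < n
    · rw [pow_succ ((y+1)/2) (n-s),
        show ((y+1)/2)^(n-s) = ((y+1)/2)^(n-s-1) * ((y+1)/2) from by
          rw [← pow_succ]; congr 1; omega]
      ring
    · have hsn' : s = n := by omega
      subst hsn'
      simp only [Nat.sub_self, Nat.cast_zero, pow_zero, zero_add, pow_one]
      ring
  have hH : ((n:ℝ) + b) * jacobi n (a + 1) (b - 1) y
      = ∑ s ∈ range (n+1), termH n a b y s := by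
    simp only [jacobi, Finset.mul_sum, termH, ea, eb]
  rw [hstep1, hH]
  rw [Finset.sum_add_distrib, Finset.sum_range_succ (termC n a b y) n,
    Finset.sum_range_succ' (termD n a b y) n, Finset.sum_range_succ (termH n a b y) n]
  have hD0 : termD n a b y 0 = 0 := by simp [termD]
  have hn : termC n a b y n = termH n a b y n := by
    simp only [termC, termH, Nat.sub_self, Nat.cast_zero, pow_zero, gc_zero, zero_add]
    linear_combination (((y-1)/2)^n) * gc_shift ((n:ℝ) + b) n
  have hmain : ∑ s ∈ range n, termC n a b y s + ∑ s ∈ range n, termD n a b y (s+1)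
      = ∑ s ∈ range n, termH n a b y s := by
    rw [← Finset.sum_add_distrib]
    refine Finset.sum_congr rfl fun s hs => ?_
    have hsn : s < n := mem_range.mp hs
    simp only [termC, termD, termH, Nat.add_sub_cancel]
    rw [show n - (s+1) + 1 = n - s from by omega]
    have g1 := gc_succ ((n:ℝ) + b) s
    have g2 := gc_pascal ((n:ℝ) + a) (n - (s+1))
    rw [show n - (s+1) + 1 = n - s from by omega] at g2
    have g3 := gc_shift ((n:ℝ) + b) s
    have ed : ((n - s : ℕ) : ℝ) = (n:ℝ) - s := by rw [Nat.cast_sub (by omega)]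
    rw [ed]
    push_cast
    set M := ((y-1)/2)^s * ((y+1)/2)^(n-s) with hM
    set Ca1 := genChoose ((n:ℝ) + a) (n - (s+1))
    set Cb0 := genChoose ((n:ℝ) + b) s
    set E := genChoose ((n:ℝ) + a + 1) (n - s)
    linear_combination (Ca1*M) * g1 + (-(((n:ℝ)+b-s)*Cb0*M)) * g2 + (E*M) * g3
  linear_combination hmain + hn + hD0


lemma keyIdentity (n : ℕ) (a b y : ℝ) :
    (n:ℝ) * (a + b + n + 1) * jacobi n (a-1) (b+1) y * jacobi n a b y
      + (b+1) * (1-y) * jacobi n (a-1) (b+1) y * jacobiD n a b y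
      - a * (1+y) * jacobi n a b y * jacobiD n (a-1) (b+1) y
      + (1-y) * (1+y) * jacobiD n a b y * jacobiD n (a-1) (b+1) y = 0 := by
  have h1 := lemI n a b y
  have h2 := lemII n (a-1) (b+1) y
  rw [show a - 1 + 1 = a from by ring, show b + 1 - 1 = b from by ring] at h2
  set P := jacobi n (a-1) (b+1) y
  set Q := jacobi n a b y
  set Pd := jacobiD n (a-1) (b+1) y
  set Qd := jacobiD n a b y
  linear_combination ((1+y)*Pd + (b+1)*P) * h1 - ((n:ℝ)+a)*P * h2

/-- The new Jacobi polynomial relation (cc12TPT) for the extended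
trigonometric Darboux–Pöschl–Teller potential. -/
theorem jacobi_trigDPT_compatibility (l : ℕ) (g h : ℝ)
    (ψp ψm : ℝ → ℝ)
    (hψp : ∀ x, ψp x = jacobi l (-g - l - 3/2) (h + l - 1/2) (Real.cos (2 * x)))
    (hψm : ∀ x, ψm x = jacobi l (-g - l - 1/2) (h + l - 3/2) (Real.cos (2 * x))) :
    ∀ x : ℝ, x ∈ Set.Ioo 0 (Real.pi / 2) →
      -8 * l * (h - g + l - 1) * ψp x * ψm x
        + 2 * (2 * h + 2 * l - 1) * Real.tan x * ψp x * deriv ψm x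
        + 2 * (2 * g + 2 * l + 1) * Real.cot x * ψm x * deriv ψp x
        - 2 * deriv ψm x * deriv ψp x = 0 := by
  intro x hx
  obtain ⟨hx0, hx2⟩ := hx
  have hpi := Real.pi_pos
  have hcos : Real.cos x ≠ 0 := by
    have := Real.cos_pos_of_mem_Ioo ⟨by linarith, hx2⟩
    linarith
  have hsin : Real.sin x ≠ 0 := by
    have := Real.sin_pos_of_pos_of_lt_pi hx0 (by linarith)
    linarith
  have hinner : HasDerivAt (fun x : ℝ => Real.cos (2 * x)) (-Real.sin (2*x) * 2) x := by
    exact (Real.hasDerivAt_cos (2*x)).comp x (by simpa using (hasDerivAt_id x).const_mul 2)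
  set a : ℝ := -g - l - 1/2 with ha
  set b : ℝ := h + l - 3/2 with hb
  have hψm' : ψm = fun x => jacobi l a b (Real.cos (2*x)) := funext hψm
  have hψp' : ψp = fun x => jacobi l (a-1) (b+1) (Real.cos (2*x)) := by
    funext t
    rw [hψp t, show a - 1 = -g - l - 3/2 from by rw [ha]; ring,
      show b + 1 = h + l - 1/2 from by rw [hb]; ring]
  have hDm : deriv ψm x = jacobiD l a b (Real.cos (2*x)) * (-Real.sin (2*x) * 2) := by
    rw [hψm']
    exact ((hasDerivAt_jacobi l a b (Real.cos (2*x))).comp x hinner).deriv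
  have hDp : deriv ψp x
      = jacobiD l (a-1) (b+1) (Real.cos (2*x)) * (-Real.sin (2*x) * 2) := by
    rw [hψp']
    exact ((hasDerivAt_jacobi l (a-1) (b+1) (Real.cos (2*x))).comp x hinner).deriv
  have hkey := keyIdentity l a b (Real.cos (2*x))
  have hpy := Real.sin_sq_add_cos_sq x
  have ht : Real.tan x * Real.sin (2*x) = 1 - Real.cos (2*x) := by
    rw [Real.tan_eq_sin_div_cos, Real.sin_two_mul, Real.cos_two_mul]
    field_simp
    linear_combination 2 * hpy
  have hc : Real.cot x * Real.sin (2*x) = 1 + Real.cos (2*x) := by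
    rw [Real.cot_eq_cos_div_sin, Real.sin_two_mul, Real.cos_two_mul]
    field_simp
    ring
  have hss : Real.sin (2*x) * Real.sin (2*x)
      = (1 - Real.cos (2*x)) * (1 + Real.cos (2*x)) := by
    linear_combination Real.sin_sq_add_cos_sq (2*x)
  rw [hψm' , hψp'] at *
  rw [hDm, hDp]
  simp only
  set y := Real.cos (2*x)
  set S := Real.sin (2*x)
  set P := jacobi l (a-1) (b+1) y
  set Q := jacobi l a b y
  set Pd := jacobiD l (a-1) (b+1) y
  set Qd := jacobiD l a b y
  rw [ha, hb] at hkey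
  linear_combination (-8 : ℝ) * hkey
    + (-4*(2*h+2*(l:ℝ)-1)*P*Qd) * ht
    + (-4*(2*g+2*(l:ℝ)+1)*Q*Pd) * hc
    + (-8*Qd*Pd) * hss
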